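/- Let K = {u ∈ ℝ^{K+1} : P̂u ≥ 0, R̂u ∈ SOC(K_r)} for matrices P̂ ∈ ℝ^{K_p×(K+1)} and R̂ ∈ ℝ^{K_r×(K+1)}. Suppose V ∈ S^{K+1} can be written as V = W + τŜ + P̂ᵀΣP̂ + (1/2)(P̂ᵀΦR̂ + R̂ᵀΦᵀP̂) where W is positive semidefinite, τ ≥ 0, Σ is an entrywise nonnegative symmetric matrix, and each row of Φ (as a vector in ℝ^{K_r}) belongs to SOC(K_r). Then uᵀVu ≥ 0 for all u ∈ K, i.e., V is copositive with respect to K. -/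

import Mathlib

open Matrix

lemma quad_eq {a b n : ℕ} (A : Matrix (Fin a) (Fin n) ℝ) (B : Matrix (Fin a) (Fin b) ℝ)
    (C : Matrix (Fin b) (Fin n) ℝ) (u : Fin n → ℝ) :
    u ⬝ᵥ (Aᵀ * B * C).mulVec u = (A.mulVec u) ⬝ᵥ (B.mulVec (C.mulVec u)) := by
  rw [Matrix.mul_assoc, ← Matrix.mulVec_mulVec, ← Matrix.mulVec_mulVec,
    Matrix.dotProduct_mulVec, Matrix.vecMul_transpose]

lemma soc_dot {n : ℕ} (x y : Fin (n + 1) → ℝ)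
    (hx : Real.sqrt (∑ ℓ ∈ Finset.univ \ {Fin.last n}, (x ℓ) ^ 2) ≤ x (Fin.last n))
    (hy : Real.sqrt (∑ ℓ ∈ Finset.univ \ {Fin.last n}, (y ℓ) ^ 2) ≤ y (Fin.last n)) :
    0 ≤ x ⬝ᵥ y := by
  have hx0 : 0 ≤ x (Fin.last n) := le_trans (Real.sqrt_nonneg _) hx
  have hy0 : 0 ≤ y (Fin.last n) := le_trans (Real.sqrt_nonneg _) hy
  have hcs : ∑ ℓ ∈ Finset.univ \ {Fin.last n}, (-x ℓ) * y ℓ ≤ x (Fin.last n) * y (Fin.last n) := by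
    refine le_trans (Real.sum_mul_le_sqrt_mul_sqrt _ _ _) ?_
    simp only [neg_sq]
    exact mul_le_mul hx hy (Real.sqrt_nonneg _) hx0
  have hsum : x ⬝ᵥ y = (∑ ℓ ∈ Finset.univ \ {Fin.last n}, x ℓ * y ℓ)
      + x (Fin.last n) * y (Fin.last n) := by
    rw [dotProduct, Finset.sum_eq_sum_sdiff_singleton_add (Finset.mem_univ (Fin.last n))]
  rw [hsum]
  have : -(x (Fin.last n) * y (Fin.last n)) ≤ ∑ ℓ ∈ Finset.univ \ {Fin.last n}, x ℓ * y ℓ := by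
    rw [neg_le]
    simpa [neg_mul, Finset.sum_neg_distrib] using hcs
  linarith

/-- Membership in the inner approximation `IA(K)` implies copositivity with respect to
`K = {u : P̂u ≥ 0, R̂u ∈ SOC}`. -/
theorem stmt2 (K Kp Kr : ℕ)
    (P : Matrix (Fin Kp) (Fin (K + 1)) ℝ) (R : Matrix (Fin (Kr + 1)) (Fin (K + 1)) ℝ)
    (V W : Matrix (Fin (K + 1)) (Fin (K + 1)) ℝ) (Sg : Matrix (Fin Kp) (Fin Kp) ℝ) (τ : ℝ)
    (Φ : Matrix (Fin Kp) (Fin (Kr + 1)) ℝ)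
    (hW : W.PosSemidef) (hτ : 0 ≤ τ)
    (hSgSymm : Sg.IsSymm)
    (hSgNonneg : ∀ i j, 0 ≤ Sg i j)
    (hΦ : ∀ i, Real.sqrt (∑ ℓ ∈ Finset.univ \ {Fin.last Kr}, (Φ i ℓ) ^ 2) ≤ Φ i (Fin.last Kr))
    (hV : V = W + τ • (Rᵀ * Matrix.diagonal (fun ℓ => if ℓ = Fin.last Kr then (1 : ℝ) else -1) * R)
        + Pᵀ * Sg * P + (1 / 2 : ℝ) • (Pᵀ * Φ * R + Rᵀ * Φᵀ * P)) :
    ∀ u : Fin (K + 1) → ℝ, (∀ i, 0 ≤ P.mulVec u i) →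
      Real.sqrt (∑ ℓ ∈ Finset.univ \ {Fin.last Kr}, (R.mulVec u ℓ) ^ 2)
        ≤ R.mulVec u (Fin.last Kr) →
      0 ≤ u ⬝ᵥ V.mulVec u := by
  intro u hPu hRu
  set p := P.mulVec u with hp
  set r := R.mulVec u with hr
  set D : Matrix (Fin (Kr + 1)) (Fin (Kr + 1)) ℝ :=
    Matrix.diagonal (fun ℓ => if ℓ = Fin.last Kr then (1 : ℝ) else -1) with hD
  have expand : u ⬝ᵥ V.mulVec u = u ⬝ᵥ W.mulVec u + τ * (u ⬝ᵥ (Rᵀ * D * R).mulVec u)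
      + u ⬝ᵥ (Pᵀ * Sg * P).mulVec u
      + (1 / 2 : ℝ) * (u ⬝ᵥ (Pᵀ * Φ * R).mulVec u + u ⬝ᵥ (Rᵀ * Φᵀ * P).mulVec u) := by
    rw [hV]
    simp [Matrix.add_mulVec, Matrix.smul_mulVec, dotProduct_add, dotProduct_smul,
      smul_eq_mul, mul_add]
  -- term W
  have t1 : 0 ≤ u ⬝ᵥ W.mulVec u := by
    have := hW.dotProduct_mulVec_nonneg u
    simpa using this
  -- term τ
  have t2 : 0 ≤ u ⬝ᵥ (Rᵀ * D * R).mulVec u := by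
    rw [quad_eq]
    have hval : r ⬝ᵥ D.mulVec r = (∑ ℓ ∈ Finset.univ \ {Fin.last Kr}, -(r ℓ) ^ 2)
        + (r (Fin.last Kr)) ^ 2 := by
      rw [dotProduct, Finset.sum_eq_sum_sdiff_singleton_add (Finset.mem_univ (Fin.last Kr))]
      congr 1
      · refine Finset.sum_congr rfl fun ℓ hℓ => ?_
        have : ℓ ≠ Fin.last Kr := by simpa [Finset.mem_sdiff] using hℓ
        simp [hD, Matrix.mulVec_diagonal, this]
        ring
      · simp [hD, Matrix.mulVec_diagonal]
        ring
    show 0 ≤ r ⬝ᵥ D.mulVec r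
    rw [hval]
    have h0 : 0 ≤ r (Fin.last Kr) := le_trans (Real.sqrt_nonneg _) hRu
    have hle : ∑ ℓ ∈ Finset.univ \ {Fin.last Kr}, (r ℓ) ^ 2 ≤ (r (Fin.last Kr)) ^ 2 := by
      have hs : 0 ≤ ∑ ℓ ∈ Finset.univ \ {Fin.last Kr}, (r ℓ) ^ 2 :=
        Finset.sum_nonneg fun _ _ => sq_nonneg _
      calc ∑ ℓ ∈ Finset.univ \ {Fin.last Kr}, (r ℓ) ^ 2
          = Real.sqrt (∑ ℓ ∈ Finset.univ \ {Fin.last Kr}, (r ℓ) ^ 2) ^ 2 :=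
            (Real.sq_sqrt hs).symm
        _ ≤ (r (Fin.last Kr)) ^ 2 := pow_le_pow_left₀ (Real.sqrt_nonneg _) hRu 2
    rw [Finset.sum_neg_distrib]
    linarith
  -- term Sigma
  have t3 : 0 ≤ u ⬝ᵥ (Pᵀ * Sg * P).mulVec u := by
    rw [quad_eq]
    simp only [dotProduct, Matrix.mulVec]
    refine Finset.sum_nonneg fun i _ => mul_nonneg (hPu i) ?_
    exact Finset.sum_nonneg fun j _ => mul_nonneg (hSgNonneg i j) (hPu j)
  -- term Phi
  have tsym : u ⬝ᵥ (Rᵀ * Φᵀ * P).mulVec u = u ⬝ᵥ (Pᵀ * Φ * R).mulVec u := by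
    rw [quad_eq, quad_eq, Matrix.dotProduct_mulVec, Matrix.vecMul_transpose,
      dotProduct_comm]
  have t4 : 0 ≤ u ⬝ᵥ (Pᵀ * Φ * R).mulVec u := by
    rw [quad_eq]
    refine Finset.sum_nonneg fun i _ => mul_nonneg (hPu i) ?_
    exact soc_dot (Φ i) r (hΦ i) hRu
  rw [expand, tsym]
  have := mul_nonneg hτ t2
  linarith
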